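/- Let G be a finitely generated metabelian group generated by d elements. Then there exists an integer N ≥ 1 such that for every g ∈ G and h ∈ [G,G], if [h, g^N] ≠ 1 then [h, g^k] ≠ 1 for all nonzero integers k. -/

import Mathlib

open scoped commutatorElement


/-- In a finitely generated commutative group, torsion elements have uniformly
bounded order. -/
lemma fg_torsion_exponent (H : Type*) [CommGroup H] [Group.FG H] :
    ∃ e : ℕ, 1 ≤ e ∧ ∀ x : H, IsOfFinOrder x → x ^ e = 1 := by
  haveI : Module.Finite ℤ (Additive H) := Module.Finite.iff_addGroup_fg.2 inferInstance
  haveI : IsNoetherian ℤ (Additive H) := inferInstance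
  set T : Subgroup H := CommGroup.torsion H with hT
  have hTfg : T.FG := by
    rw [Subgroup.fg_iff_add_fg]
    have h1 : (AddSubgroup.toIntSubmodule (Subgroup.toAddSubgroup T)).FG :=
      IsNoetherian.noetherian _
    have h2 := (Submodule.fg_iff_addSubgroup_fg _).1 h1
    rwa [AddSubgroup.toIntSubmodule_toAddSubgroup] at h2
  obtain ⟨F, hF⟩ := hTfg
  refine ⟨∏ x ∈ F, orderOf x, ?_, ?_⟩
  · refine Nat.one_le_iff_ne_zero.2 (Finset.prod_ne_zero_iff.2 ?_)
    intro x hx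
    have hxT : x ∈ T := hF ▸ Subgroup.subset_closure hx
    exact (hxT.orderOf_pos).ne'
  · intro x hx
    have hxT : x ∈ T := hx
    have : T ≤ (powMonoidHom (∏ x ∈ F, orderOf x) : H →* H).ker := by
      rw [← hF, Subgroup.closure_le]
      intro t ht
      have htT : t ∈ T := hF ▸ Subgroup.subset_closure ht
      have : orderOf t ∣ ∏ x ∈ F, orderOf x := Finset.dvd_prod_of_mem _ ht
      simpa [MonoidHom.mem_ker, powMonoidHom_apply] using orderOf_dvd_iff_pow_eq_one.1 this
    simpa [MonoidHom.mem_ker, powMonoidHom_apply] using this hxT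


lemma fix_pow_mul {P A : Type*} [CommRing P] [AddCommGroup A] [Module P A]
    {c : P} {m : A} {a : ℕ} (h : c ^ a • m = m) (t : ℕ) : c ^ (a * t) • m = m := by
  induction t with
  | zero => simp
  | succ t ih =>
    rw [mul_add, mul_one, pow_add, mul_smul, h, ih]

lemma fix_of_dvd {P A : Type*} [CommRing P] [AddCommGroup A] [Module P A]
    {c : P} {m : A} {a b : ℕ} (h : c ^ a • m = m) (hd : a ∣ b) : c ^ b • m = m := by
  obtain ⟨t, rfl⟩ := hd
  exact fix_pow_mul h t

lemma module_side (P : Type*) [CommRing P] [IsNoetherianRing P]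
    (A : Type*) [AddCommGroup A] [Module P A] [Module.Finite P A]
    (Q : Type*) [CommGroup Q] [Group.FG Q] (φ : Q →* Pˣ) :
    ∃ N : ℕ, 1 ≤ N ∧ ∀ (q : Q) (m : A) (k : ℕ), 1 ≤ k →
      ((φ q : P)) ^ k • m = m → ((φ q : P)) ^ N • m = m := by
  haveI : IsNoetherian P A := inferInstance
  -- the ℤ-torsion submodule and its exponent
  let Θ : Submodule P A :=
    { carrier := {a | ∃ n : ℕ, 1 ≤ n ∧ n • a = 0}
      add_mem' := by
        rintro a b ⟨n, hn, ha⟩ ⟨n', hn', hb⟩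
        refine ⟨n * n', Nat.one_le_iff_ne_zero.2 (Nat.mul_ne_zero
          (Nat.one_le_iff_ne_zero.1 hn) (Nat.one_le_iff_ne_zero.1 hn')), ?_⟩
        have h1 : (n * n') • a = 0 := by rw [mul_comm, mul_smul, ha, smul_zero]
        have h2 : (n * n') • b = 0 := by rw [mul_smul, hb, smul_zero]
        rw [smul_add, h1, h2, add_zero]
      zero_mem' := ⟨1, le_refl 1, smul_zero 1⟩
      smul_mem' := by
        rintro p a ⟨n, hn, ha⟩
        exact ⟨n, hn, by rw [smul_comm, ha, smul_zero]⟩ }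
  obtain ⟨Fθ, hFθ⟩ : Θ.FG := IsNoetherian.noetherian Θ
  have hmemΘ : ∀ x ∈ Fθ, ∃ n : ℕ, 1 ≤ n ∧ n • x = 0 := by
    intro x hx
    have : x ∈ Θ := hFθ ▸ Submodule.subset_span hx
    exact this
  set E : ℕ := ∏ x ∈ Fθ.attach, (hmemΘ x x.2).choose with hEdef
  have hE1 : 1 ≤ E := Finset.one_le_prod' (fun x _ => (hmemΘ x x.2).choose_spec.1)
  have hEkill : ∀ a ∈ Θ, E • a = 0 := by
    intro a ha
    rw [← hFθ] at ha
    induction ha using Submodule.span_induction with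
    | mem x hx =>
      have hdvd : (hmemΘ x hx).choose ∣ E :=
        Finset.dvd_prod_of_mem _ (Finset.mem_attach Fθ ⟨x, hx⟩)
      obtain ⟨t, ht⟩ := hdvd
      rw [ht, mul_comm, mul_smul, (hmemΘ x hx).choose_spec.2, smul_zero]
    | zero => rw [smul_zero]
    | add x y _ _ hx hy => rw [smul_add, hx, hy, add_zero]
    | smul p x _ hx => rw [smul_comm, hx, smul_zero]
  -- maximal good submodule
  set 𝒮 : Set (Submodule P A) := {W | ∃ N : ℕ, 1 ≤ N ∧ ∀ (q : Q) (m : A), m ∈ W →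
    ∀ k : ℕ, 1 ≤ k → ((φ q : P)) ^ k • m = m → ((φ q : P)) ^ N • m = m} with h𝒮
  have hbot : (⊥ : Submodule P A) ∈ 𝒮 := by
    refine ⟨1, le_refl 1, ?_⟩
    intro q m hm k hk h
    rw [Submodule.mem_bot] at hm
    subst hm; rw [smul_zero]
  obtain ⟨W₀, hW₀mem, hW₀max⟩ :=
    set_has_maximal_iff_noetherian.2 (inferInstance : IsNoetherian P A) 𝒮 ⟨⊥, hbot⟩
  obtain ⟨N₀, hN₀1, hN₀⟩ := hW₀mem
  suffices htop : W₀ = ⊤ by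
    exact ⟨N₀, hN₀1, fun q m k hk h => hN₀ q m (htop ▸ Submodule.mem_top) k hk h⟩
  by_contra hne
  haveI : Nontrivial (A ⧸ W₀) := (Submodule.Quotient.nontrivial_iff (p := W₀)).2 hne
  obtain ⟨𝔭, h𝔭⟩ := associatedPrimes.nonempty P (A ⧸ W₀)
  obtain ⟨hprime, z, hz⟩ := isAssociatedPrime_iff.1 h𝔭
  have hz_iff : ∀ p : P, p • z = 0 ↔ p ∈ 𝔭 := fun p => by
    rw [hz, Submodule.mem_colon_singleton, Submodule.mem_bot]
  have hzne : z ≠ 0 := by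
    intro h
    exact hprime.ne_top ((Ideal.eq_top_iff_one 𝔭).2 ((hz_iff 1).1 (by rw [h, smul_zero])))
  obtain ⟨zt, hzt⟩ := Submodule.Quotient.mk_surjective W₀ z
  have hlt : W₀ < W₀ ⊔ (P ∙ zt) := by
    refine lt_of_le_of_ne le_sup_left (fun hEq => ?_)
    have hztW : zt ∈ W₀ := by
      rw [hEq]
      exact Submodule.mem_sup_right (Submodule.mem_span_singleton_self zt)
    exact hzne (by rw [← hzt]; exact (Submodule.Quotient.mk_eq_zero W₀).2 hztW)
  refine hW₀max (W₀ ⊔ (P ∙ zt)) ?_ hlt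
  -- show the bigger submodule is good
  set π := Ideal.Quotient.mk 𝔭 with hπ
  set ψ : Q →* (P ⧸ 𝔭)ˣ := (Units.map π.toMonoidHom).comp φ with hψ
  haveI : Group.FG ψ.range := Group.fg_of_surjective ψ.rangeRestrict_surjective
  obtain ⟨e, he1, he⟩ := fg_torsion_exponent ψ.range
  refine ⟨Nat.lcm N₀ e * E, ?_, ?_⟩
  · have hL1 : 1 ≤ Nat.lcm N₀ e := Nat.lcm_pos hN₀1 he1
    calc 1 = 1 * 1 := (one_mul 1).symm
    _ ≤ Nat.lcm N₀ e * E := Nat.mul_le_mul hL1 hE1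
  intro q m hm k hk hfix
  set c : P := (φ q : P) with hc
  obtain ⟨w, hw, y, hy, rfl⟩ := Submodule.mem_sup.1 hm
  obtain ⟨p, rfl⟩ := Submodule.mem_span_singleton.1 hy
  have hmq : W₀.mkQ (w + p • zt) = p • z := by
    rw [map_add, map_smul, Submodule.mkQ_apply, Submodule.mkQ_apply, hzt,
      (Submodule.Quotient.mk_eq_zero W₀).2 hw, zero_add]
  have hfixq : (c ^ k - 1) * p ∈ 𝔭 := by
    have h1 := congrArg W₀.mkQ hfix
    rw [map_smul, hmq] at h1
    apply (hz_iff _).1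
    rw [sub_mul, one_mul, sub_smul, mul_smul, h1, sub_self]
  rcases hprime.mem_or_mem hfixq with hck | hp
  · -- c^k - 1 ∈ 𝔭
    have hψk : (ψ q) ^ k = 1 := by
      apply Units.ext
      show (π (φ q : P)) ^ k = 1
      rw [← map_pow, ← map_one π]
      exact Ideal.Quotient.eq.2 (by simpa using hck)
    have hψe : (ψ q) ^ e = 1 := by
      have hfin : IsOfFinOrder (⟨ψ q, MonoidHom.mem_range.mpr ⟨q, rfl⟩⟩ : ψ.range) := by
        apply isOfFinOrder_iff_pow_eq_one.2
        exact ⟨k, Nat.lt_of_lt_of_le Nat.zero_lt_one hk, by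
          ext; simpa using congrArg Units.val hψk⟩
      have := he _ hfin
      have := congrArg (Subtype.val) this
      simpa using this
    have hce : c ^ e - 1 ∈ 𝔭 := by
      have : π (c ^ e) = π 1 := by
        rw [map_one]
        have := congrArg Units.val hψe
        rw [map_pow]; exact this
      exact Ideal.Quotient.eq.1 this
    set x₀ : A := c ^ e • (w + p • zt) - (w + p • zt) with hx₀def
    have hx₀W : x₀ ∈ W₀ := by
      have hq0 : ((c ^ e - 1) * p) • z = 0 := (hz_iff _).2 (Ideal.mul_mem_right p _ hce)
      have hmk : W₀.mkQ x₀ = c ^ e • (p • z) - p • z := by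
        rw [hx₀def, map_sub, map_smul, hmq]
      have hmk2 : c ^ e • (p • z) - p • z = ((c ^ e - 1) * p) • z := by
        rw [sub_mul, one_mul, sub_smul, mul_smul]
      have : W₀.mkQ x₀ = 0 := by rw [hmk, hmk2]; exact hq0
      rwa [Submodule.mkQ_apply, Submodule.Quotient.mk_eq_zero] at this
    have hx₀fix : c ^ k • x₀ = x₀ := by
      rw [hx₀def, smul_sub, hfix, smul_smul, mul_comm, ← smul_smul, hfix]
    have hx₀N : c ^ N₀ • x₀ = x₀ := hN₀ q x₀ hx₀W k hk hx₀fix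
    set L := Nat.lcm N₀ e with hL
    set v : P := c ^ L with hv
    obtain ⟨s, hs⟩ : c ^ e - 1 ∣ v - 1 := by
      obtain ⟨t, ht⟩ := Nat.dvd_lcm_right N₀ e
      have : v = (c ^ e) ^ t := by rw [hv, hL, ht, pow_mul]
      rw [this]
      simpa using sub_dvd_pow_sub_pow (c ^ e) 1 t
    obtain ⟨s', hs'⟩ : c ^ N₀ - 1 ∣ v - 1 := by
      obtain ⟨t, ht⟩ := Nat.dvd_lcm_left N₀ e
      have : v = (c ^ N₀) ^ t := by rw [hv, hL, ht, pow_mul]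
      rw [this]
      simpa using sub_dvd_pow_sub_pow (c ^ N₀) 1 t
    have hinner : (c ^ e - 1) • (w + p • zt) = x₀ := by
      rw [sub_smul, one_smul, hx₀def]
    have houter : (c ^ N₀ - 1) • x₀ = 0 := by
      rw [sub_smul, one_smul, hx₀N, sub_self]
    set x : A := (v - 1) • (w + p • zt) with hxdef
    have h1 : x = s • x₀ := by
      rw [hxdef, hs, mul_comm, mul_smul, hinner]
    have h2 : (v - 1) • s • x₀ = 0 := by
      rw [hs', mul_comm, mul_smul, smul_comm ((c : P) ^ N₀ - 1) s x₀, houter, smul_zero,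
        smul_zero]
    have hvv : (v - 1) • x = 0 := by rw [h1]; exact h2
    have hvx : v • x = x := by
      have h3 := hvv
      rw [sub_smul, one_smul, sub_eq_zero] at h3
      exact h3
    have hiter : ∀ j : ℕ, v ^ j • (w + p • zt) = (w + p • zt) + j • x := by
      intro j
      induction j with
      | zero => rw [pow_zero, one_smul, zero_nsmul, add_zero]
      | succ j ih =>
        have hvm : v • (w + p • zt) = (w + p • zt) + x := by
          rw [hxdef, sub_smul, one_smul]
          abel
        rw [pow_succ', mul_smul, ih, smul_add, hvm, smul_comm v j x, hvx, succ_nsmul]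
        abel
    have hvk : v ^ k • (w + p • zt) = w + p • zt := by
      have : c ^ (L * k) • (w + p • zt) = w + p • zt :=
        fix_of_dvd hfix (Dvd.intro_left L rfl)
      rwa [pow_mul] at this
    have hkx : k • x = 0 := by
      have h2 := hiter k
      rw [hvk] at h2
      exact (left_eq_add.1 h2)
    have hEx : E • x = 0 := hEkill x ⟨k, hk, hkx⟩
    have final : v ^ E • (w + p • zt) = w + p • zt := by
      rw [hiter E, hEx, add_zero]
    rw [pow_mul]
    exact final
  · -- p ∈ 𝔭 : m lies in W₀
    have hm0 : (w + p • zt) ∈ W₀ := by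
      have : W₀.mkQ (w + p • zt) = 0 := by rw [hmq]; exact (hz_iff p).2 hp
      rwa [Submodule.mkQ_apply, Submodule.Quotient.mk_eq_zero] at this
    have h1 := hN₀ q _ hm0 k hk hfix
    exact fix_of_dvd h1 (Dvd.dvd.mul_right (Nat.dvd_lcm_left _ _) E)


lemma monoidAlgebra_noetherian (Q : Type*) [CommGroup Q] [Group.FG Q] :
    IsNoetherianRing (MonoidAlgebra ℤ Q) := by
  obtain ⟨F, hF⟩ := (Group.FG.out : (⊤ : Subgroup Q).FG)
  let v : (↥F × Bool) → MonoidAlgebra ℤ Q :=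
    fun x => MonoidAlgebra.of ℤ Q (cond x.2 (x.1 : Q) (x.1 : Q)⁻¹)
  let f := MvPolynomial.aeval (R := ℤ) v
  have hsurj : Function.Surjective f := by
    have hof : ∀ q : Q, MonoidAlgebra.of ℤ Q q ∈ f.range := by
      have hK : ∀ q : Q, q ∈ (⊤ : Subgroup Q) →
          (MonoidAlgebra.of ℤ Q q ∈ f.range ∧ MonoidAlgebra.of ℤ Q q⁻¹ ∈ f.range) := by
        rw [← hF]
        intro q hq
        induction hq using Subgroup.closure_induction with
        | mem s hs =>
          constructor
          · have : MonoidAlgebra.of ℤ Q s = f (MvPolynomial.X (⟨s, hs⟩, true)) := by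
              simp [f, v, MvPolynomial.aeval_X]
            rw [this]; exact Set.mem_range_self _
          · have : MonoidAlgebra.of ℤ Q s⁻¹ = f (MvPolynomial.X (⟨s, hs⟩, false)) := by
              simp [f, v, MvPolynomial.aeval_X]
            rw [this]; exact Set.mem_range_self _
        | one => exact ⟨by simpa only [map_one] using (f.range).one_mem, by simpa only [inv_one, map_one] using (f.range).one_mem⟩
        | mul a b _ _ ha hb =>
          refine ⟨?_, ?_⟩
          · rw [map_mul]; exact mul_mem ha.1 hb.1
          · rw [mul_inv_rev, map_mul]
            exact mul_mem hb.2 ha.2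
        | inv a _ ha => exact ⟨by simpa using ha.2, by simpa using ha.1⟩
      exact fun q => (hK q trivial).1
    intro y
    have : y ∈ f.range := by
      induction y using MonoidAlgebra.induction_on with
      | of q => exact hof q
      | add a b ha hb => exact add_mem ha hb
      | smul r a ha => exact Subalgebra.smul_mem _ ha r
    exact this
  exact isNoetherianRing_of_surjective (MvPolynomial (↥F × Bool) ℤ) (MonoidAlgebra ℤ Q)
    f.toRingHom hsurj

lemma commutator_le_of_gen {G : Type*} [Group G] (S : Finset G)
    (hgen : Subgroup.closure (S : Set G) = ⊤) (W : Subgroup G)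
    (hconj : ∀ g : G, ∀ w ∈ W, g * w * g⁻¹ ∈ W)
    (hS : ∀ s ∈ S, ∀ t ∈ S, ⁅s, t⁆ ∈ W) : commutator G ≤ W := by
  have step1 : ∀ s ∈ S, ∀ h : G, ⁅s, h⁆ ∈ W := by
    intro s hs h
    have hh : h ∈ Subgroup.closure (S : Set G) := by rw [hgen]; trivial
    induction hh using Subgroup.closure_induction with
    | mem t ht => exact hS s hs t ht
    | one => simpa using W.one_mem
    | mul a b _ _ ha hb =>
      have hid : ⁅s, a * b⁆ = ⁅s, a⁆ * (a * ⁅s, b⁆ * a⁻¹) := by group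
      rw [hid]
      exact W.mul_mem ha (hconj a _ hb)
    | inv a _ ha =>
      have hid : ⁅s, a⁻¹⁆ = a⁻¹ * ⁅s, a⁆⁻¹ * a⁻¹⁻¹ := by group
      rw [hid]
      exact hconj a⁻¹ _ (W.inv_mem ha)
  have step2 : ∀ g h : G, ⁅g, h⁆ ∈ W := by
    intro g h
    have hg : g ∈ Subgroup.closure (S : Set G) := by rw [hgen]; trivial
    induction hg using Subgroup.closure_induction with
    | mem s hsm => exact step1 s hsm h
    | one => simpa using W.one_mem
    | mul a b _ _ ha hb =>
      have hid : ⁅a * b, h⁆ = (a * ⁅b, h⁆ * a⁻¹) * ⁅a, h⁆ := by group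
      rw [hid]
      exact W.mul_mem (hconj a _ hb) ha
    | inv a _ ha =>
      have hid : ⁅a⁻¹, h⁆ = a⁻¹ * ⁅a, h⁆⁻¹ * a⁻¹⁻¹ := by group
      rw [hid]
      exact hconj a⁻¹ _ (W.inv_mem ha)
  rw [commutator, Subgroup.commutator_le]
  intro g _ h _
  exact step2 g h

theorem metabelian_orbit_exponent (G : Type*) [Group G] (d : ℕ) (S : Finset G)
    (hcard : S.card = d) (hgen : Subgroup.closure (S : Set G) = ⊤)
    (hmeta : ∀ a ∈ commutator G, ∀ b ∈ commutator G, a * b = b * a) :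
    ∃ N : ℕ, 1 ≤ N ∧ ∀ g : G, ∀ h ∈ commutator G,
      ⁅h, g ^ N⁆ ≠ 1 → ∀ k : ℤ, k ≠ 0 → ⁅h, g ^ k⁆ ≠ 1 := by
  classical
  letI cg : CommGroup ↥(commutator G) :=
    { (inferInstance : Group ↥(commutator G)) with
      mul_comm := fun a b => Subtype.ext (hmeta a a.2 b b.2) }
  have hconjmem : ∀ (g : G) (a : ↥(commutator G)), g * ↑a * g⁻¹ ∈ commutator G :=
    fun g a => Subgroup.Normal.conj_mem inferInstance (↑a) a.2 g
  -- conjugation as a linear endomorphism of the additivized commutator subgroup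
  let conjE : G → Module.End ℤ (Additive ↥(commutator G)) := fun g =>
    AddMonoidHom.toIntLinearMap
      { toFun := fun a => Additive.ofMul
          (⟨g * ↑(Additive.toMul a) * g⁻¹, hconjmem g (Additive.toMul a)⟩ : ↥(commutator G))
        map_zero' := congrArg Additive.ofMul (Subtype.ext (by
          simp only [toMul_zero, OneMemClass.coe_one]
          group))
        map_add' := fun a b => congrArg Additive.ofMul (Subtype.ext (by
          show g * (↑(Additive.toMul a) * ↑(Additive.toMul b)) * g⁻¹ =
            g * ↑(Additive.toMul a) * g⁻¹ * (g * ↑(Additive.toMul b) * g⁻¹)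
          group)) }
  let ρ₀ : G →* Module.End ℤ (Additive ↥(commutator G)) :=
    { toFun := conjE
      map_one' := LinearMap.ext fun a => congrArg Additive.ofMul (Subtype.ext (by
        show 1 * (↑(Additive.toMul a) : G) * 1⁻¹ = ↑(Additive.toMul a)
        group))
      map_mul' := fun g h => LinearMap.ext fun a => congrArg Additive.ofMul (Subtype.ext (by
        show g * h * (↑(Additive.toMul a) : G) * (g * h)⁻¹ =
          g * (h * ↑(Additive.toMul a) * h⁻¹) * g⁻¹
        group)) }
  have htriv : ∀ n ∈ commutator G, ρ₀ n = 1 := by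
    intro n hn
    refine LinearMap.ext fun a => congrArg Additive.ofMul (Subtype.ext ?_)
    show n * (↑(Additive.toMul a) : G) * n⁻¹ = ↑(Additive.toMul a)
    rw [hmeta n hn (↑(Additive.toMul a)) (Additive.toMul a).2]
    group
  let ρ : Abelianization G →* Module.End ℤ (Additive ↥(commutator G)) :=
    QuotientGroup.lift (commutator G) ρ₀ htriv
  letI : Group.FG G := ⟨⟨S, hgen⟩⟩
  have hos : Function.Surjective (Abelianization.of (G := G)) :=
    fun x => Quotient.inductionOn' x fun g => ⟨g, rfl⟩
  haveI hfgQ : Group.FG (Abelianization G) := Group.fg_of_surjective hos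
  letI : IsNoetherianRing (MonoidAlgebra ℤ (Abelianization G)) :=
    monoidAlgebra_noetherian (Abelianization G)
  let Φ := (MonoidAlgebra.lift ℤ (Module.End ℤ (Additive ↥(commutator G)))
    (Abelianization G)) ρ
  letI modA : Module (MonoidAlgebra ℤ (Abelianization G)) (Additive ↥(commutator G)) :=
    Module.compHom _ Φ.toRingHom
  have hsmul : ∀ (p : MonoidAlgebra ℤ (Abelianization G)) (a : Additive ↥(commutator G)),
      p • a = Φ p a := fun _ _ => rfl
  have hofsmul : ∀ (g : G) (a : Additive ↥(commutator G)),
      (MonoidAlgebra.of ℤ (Abelianization G) (Abelianization.of g)) • a = conjE g a := by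
    intro g a
    rw [hsmul, MonoidAlgebra.lift_of]
    rfl
  -- finite generation of the module
  have hXmem : ∀ p : ↥(S ×ˢ S), ⁅(p.1.1 : G), p.1.2⁆ ∈ commutator G := by
    intro p
    exact Subgroup.commutator_mem_commutator (Subgroup.mem_top _) (Subgroup.mem_top _)
  let X : Finset (Additive ↥(commutator G)) :=
    (S ×ˢ S).attach.image fun p => Additive.ofMul (⟨⁅(p.1.1 : G), p.1.2⁆, hXmem p⟩)
  have hspan : Submodule.span (MonoidAlgebra ℤ (Abelianization G))
      (↑X : Set (Additive ↥(commutator G))) = ⊤ := by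
    set Wsp := Submodule.span (MonoidAlgebra ℤ (Abelianization G))
      (X : Set (Additive ↥(commutator G))) with hWsp
    have hmemW : ∀ (g : G) (hg : g ∈ commutator G),
        Additive.ofMul (⟨g, hg⟩ : ↥(commutator G)) ∈ Wsp →
        ∀ (g' : G) (hg' : g' ∈ commutator G), g' = g →
        Additive.ofMul (⟨g', hg'⟩ : ↥(commutator G)) ∈ Wsp := by
      intro g hg hmem g' hg' hEq
      subst hEq; exact hmem
    let W' : Subgroup G :=
      { carrier := {g | ∃ hg : g ∈ commutator G,
          Additive.ofMul (⟨g, hg⟩ : ↥(commutator G)) ∈ Wsp}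
        one_mem' := ⟨Subgroup.one_mem _, by
          have h0 : Additive.ofMul (⟨(1 : G), Subgroup.one_mem _⟩ : ↥(commutator G)) =
              (0 : Additive ↥(commutator G)) := congrArg Additive.ofMul (Subtype.ext rfl)
          rw [h0]; exact Submodule.zero_mem _⟩
        mul_mem' := by
          rintro a b ⟨ha, hamem⟩ ⟨hb, hbmem⟩
          refine ⟨Subgroup.mul_mem _ ha hb, ?_⟩
          have hab : Additive.ofMul (⟨a * b, Subgroup.mul_mem _ ha hb⟩ : ↥(commutator G)) =
              Additive.ofMul (⟨a, ha⟩ : ↥(commutator G)) +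
              Additive.ofMul (⟨b, hb⟩ : ↥(commutator G)) :=
            congrArg Additive.ofMul (Subtype.ext rfl)
          rw [hab]; exact Submodule.add_mem _ hamem hbmem
        inv_mem' := by
          rintro a ⟨ha, hamem⟩
          refine ⟨Subgroup.inv_mem _ ha, ?_⟩
          have hai : Additive.ofMul (⟨a⁻¹, Subgroup.inv_mem _ ha⟩ : ↥(commutator G)) =
              -Additive.ofMul (⟨a, ha⟩ : ↥(commutator G)) :=
            congrArg Additive.ofMul (Subtype.ext rfl)
          rw [hai]; exact Submodule.neg_mem _ hamem }
    have hWconj : ∀ g : G, ∀ w ∈ W', g * w * g⁻¹ ∈ W' := by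
      rintro g w ⟨hw, hwmem⟩
      refine ⟨hconjmem g ⟨w, hw⟩, ?_⟩
      have hact : Additive.ofMul (⟨g * w * g⁻¹, hconjmem g ⟨w, hw⟩⟩ : ↥(commutator G)) =
          (MonoidAlgebra.of ℤ (Abelianization G) (Abelianization.of g)) •
            Additive.ofMul (⟨w, hw⟩ : ↥(commutator G)) := by
        rw [hofsmul]
        rfl
      rw [hact]
      exact Submodule.smul_mem _ _ hwmem
    have hWS : ∀ s ∈ S, ∀ t ∈ S, ⁅s, t⁆ ∈ W' := by
      intro s hs t ht
      have hp : ((s, t) : G × G) ∈ S ×ˢ S := Finset.mem_product.2 ⟨hs, ht⟩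
      refine ⟨hXmem ⟨(s, t), hp⟩, ?_⟩
      apply Submodule.subset_span
      exact Finset.mem_coe.2 (Finset.mem_image.2 ⟨⟨(s, t), hp⟩, Finset.mem_attach _ _, rfl⟩)
    have hle : commutator G ≤ W' := commutator_le_of_gen S hgen W' hWconj hWS
    rw [Submodule.eq_top_iff']
    intro a
    obtain ⟨hg, hmem⟩ := hle (Additive.toMul a).2
    have : Additive.ofMul (⟨↑(Additive.toMul a), hg⟩ : ↥(commutator G)) = a :=
      congrArg Additive.ofMul (Subtype.ext rfl)
    rwa [this] at hmem
  letI : Module.Finite (MonoidAlgebra ℤ (Abelianization G)) (Additive ↥(commutator G)) :=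
    ⟨⟨X, hspan⟩⟩
  -- the units morphism
  let φu : Abelianization G →* (MonoidAlgebra ℤ (Abelianization G))ˣ :=
    { toFun := fun q =>
        ⟨MonoidAlgebra.of ℤ (Abelianization G) q, MonoidAlgebra.of ℤ (Abelianization G) q⁻¹,
          by rw [← map_mul, mul_inv_cancel, map_one],
          by rw [← map_mul, inv_mul_cancel, map_one]⟩
      map_one' := Units.ext (by simp [MonoidAlgebra.one_def])
      map_mul' := fun a b => Units.ext (by simp) }
  obtain ⟨N, hN1, hN⟩ := module_side (MonoidAlgebra ℤ (Abelianization G))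
    (Additive ↥(commutator G)) (Abelianization G) φu
  refine ⟨N, hN1, ?_⟩
  intro g h hh hne k hk0 hcon
  apply hne
  set m : Additive ↥(commutator G) := Additive.ofMul (⟨h, hh⟩ : ↥(commutator G)) with hm
  have hkey : ∀ (y : G) (j : ℕ),
      (((φu (Abelianization.of y) : MonoidAlgebra ℤ (Abelianization G))) ^ j • m = m) ↔
      (y ^ j * h * (y ^ j)⁻¹ = h) := by
    intro y j
    have e1 : ((φu (Abelianization.of y) : MonoidAlgebra ℤ (Abelianization G))) ^ j
        = MonoidAlgebra.of ℤ (Abelianization G) (Abelianization.of (y ^ j)) := by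
      show (MonoidAlgebra.of ℤ (Abelianization G) (Abelianization.of y)) ^ j = _
      rw [← map_pow, ← map_pow]
    have h1 : ((φu (Abelianization.of y) : MonoidAlgebra ℤ (Abelianization G))) ^ j • m
        = Additive.ofMul (⟨y ^ j * h * (y ^ j)⁻¹, hconjmem (y ^ j) ⟨h, hh⟩⟩ :
            ↥(commutator G)) := by
      rw [e1, hofsmul]
      rfl
    rw [h1]
    constructor
    · intro he
      have h2 := congrArg (fun a => ((Additive.toMul a : ↥(commutator G)) : G)) he
      simpa [hm] using h2
    · intro he
      exact congrArg Additive.ofMul (Subtype.ext he)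
  have hn1 : 1 ≤ k.natAbs := Int.natAbs_pos.2 hk0
  have hcomm : Commute h (g ^ k.natAbs) := by
    have hc0 : Commute h (g ^ k) := commutatorElement_eq_one_iff_commute.1 hcon
    rcases Int.natAbs_eq k with he | he
    · rw [he, zpow_natCast] at hc0; exact hc0
    · rw [he, zpow_neg, zpow_natCast] at hc0
      simpa using hc0.inv_right
  have hfixn : g ^ k.natAbs * h * (g ^ k.natAbs)⁻¹ = h := by
    rw [hcomm.symm.eq]
    group
  have hfix := (hkey g k.natAbs).2 hfixn
  have hNfix := hN (Abelianization.of g) m k.natAbs hn1 hfix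
  have hconjN := (hkey g N).1 hNfix
  have h2 : g ^ N * h = h * g ^ N := by
    have h3 := congrArg (fun t => t * g ^ N) hconjN
    simpa [inv_mul_cancel_right] using h3
  exact commutatorElement_eq_one_iff_mul_comm.2 h2.symm
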